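/- arXiv:2605.00248 — 3 statements merged into one kernel-verified Lean document; each statement's English description precedes it below -/
import Mathlib

section
/- In the pollution game with C countries where country c has utility U_c(q_c, q_{-c}) = A_c q_c - B_c q_c^2 - D_c Q_W^2 with Q_W = sum_c q_c, B_c > 0, D_c ≥ 0, if each country plays a best response (the strategy profile is a Nash equilibrium), then the total pollution is Q_W = ( (1/2) * sum_c (A_c/B_c) ) / ( 1 + sum_c (D_c/B_c) ). -/
open Finset

/-- Country `c`'s utility in the pollution game. -/
def pollutionUtility {C : ℕ} (A B D : Fin C → ℝ) (c : Fin C) (q : Fin C → ℝ) : ℝ :=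
  A c * q c - B c * (q c) ^ 2 - D c * (∑ j, q j) ^ 2

/-- `q` is a Nash equilibrium: no unilateral deviation improves a country's utility. -/
def IsNash {C : ℕ} (A B D : Fin C → ℝ) (q : Fin C → ℝ) : Prop :=
  ∀ c : Fin C, ∀ x : ℝ,
    pollutionUtility A B D c (Function.update q c x) ≤ pollutionUtility A B D c q

theorem pollution_total_at_nash {C : ℕ} (hC : 1 ≤ C)
    (A B D : Fin C → ℝ) (hB : ∀ c, 0 < B c) (hD : ∀ c, 0 ≤ D c)
    (q : Fin C → ℝ) (hq : IsNash A B D q) :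
    (∑ c, q c) = ((1 / 2) * ∑ c, A c / B c) / (1 + ∑ c, D c / B c) := by
  set Q := ∑ c, q c with hQ
  have key : ∀ c, A c - 2 * B c * q c - 2 * D c * Q = 0 := by
    intro c
    set α := A c - 2 * B c * q c - 2 * D c * Q with hα
    have hβ : 0 < B c + D c := by have := hB c; have := hD c; linarith
    have h : ∀ t : ℝ, α * t - (B c + D c) * t ^ 2 ≤ 0 := by
      intro t
      have h0 := hq c (q c + t)
      unfold pollutionUtility at h0
      have hsum : (∑ j, Function.update q c (q c + t) j) = Q + t := by
        rw [Finset.sum_update_of_mem (Finset.mem_univ c),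
          Finset.sdiff_singleton_eq_erase, hQ,
          ← Finset.sum_erase_add Finset.univ q (Finset.mem_univ c)]
        ring
      rw [hsum, Function.update_self] at h0
      rw [hα, hQ]
      nlinarith [h0]
    by_contra hne
    have hα2 : 0 < α ^ 2 := by positivity
    have heq : α * (α / (2 * (B c + D c))) - (B c + D c) * (α / (2 * (B c + D c))) ^ 2
        = α ^ 2 / (4 * (B c + D c)) := by
      field_simp; ring
    have h1 := h (α / (2 * (B c + D c)))
    rw [heq] at h1
    have h2 : 0 < α ^ 2 / (4 * (B c + D c)) := by positivity
    linarith
  have key2 : ∀ c, A c / B c - 2 * q c - 2 * (D c / B c) * Q = 0 := by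
    intro c
    have hb := (hB c).ne'
    field_simp
    nlinarith [key c]
  have h0 : ∑ c, (A c / B c - 2 * q c - 2 * (D c / B c) * Q) = 0 := by simp [key2]
  rw [Finset.sum_sub_distrib, Finset.sum_sub_distrib] at h0
  have e2 : ∑ c, 2 * q c = 2 * Q := by rw [hQ, Finset.mul_sum]
  have e3 : ∑ c, 2 * (D c / B c) * Q = 2 * Q * ∑ c, D c / B c := by
    rw [Finset.mul_sum]; exact Finset.sum_congr rfl fun c _ => by ring
  rw [e2, e3] at h0
  have hden : 0 < 1 + ∑ c, D c / B c := by
    have : 0 ≤ ∑ c, D c / B c :=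
      Finset.sum_nonneg fun c _ => div_nonneg (hD c) (hB c).le
    linarith
  rw [eq_div_iff hden.ne']
  linarith [h0]
end

section
/- In the pollution game at any Nash equilibrium, each country's individual contribution satisfies q_c = A_c/(2 B_c) - (D_c/B_c) * Q_W, where Q_W is the total pollution at equilibrium. -/
open Finset

theorem pollution_individual_at_nash {C : ℕ}
    (A B D : Fin C → ℝ) (hB : ∀ c, 0 < B c) (hD : ∀ c, 0 ≤ D c)
    (q : Fin C → ℝ) (hq : IsNash A B D q) :
    ∀ c : Fin C, q c = A c / (2 * B c) - (D c / B c) * (∑ j, q j) := by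
  intro c
  have hBc := hB c
  have hDc := hD c
  have hBD : 0 < B c + D c := by linarith
  set S : ℝ := ∑ j ∈ univ.erase c, q j with hS
  have hQ : (∑ j, q j) = q c + S := by
    rw [hS, ← Finset.add_sum_erase _ _ (Finset.mem_univ c)]
  have hsum : ∀ x : ℝ, (∑ j, Function.update q c x j) = x + S := by
    intro x
    rw [hS, ← Finset.add_sum_erase _ _ (Finset.mem_univ c)]
    congr 1
    · simp
    · apply Finset.sum_congr rfl
      intro j hj
      exact Function.update_of_ne (Finset.ne_of_mem_erase hj) _ _
  -- key inequality: for all t, (B+D) t^2 - L t ≥ 0, where L = A - 2B q_c - 2 D Q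
  set L : ℝ := A c - 2 * B c * q c - 2 * D c * (q c + S) with hL
  have key : ∀ t : ℝ, 0 ≤ (B c + D c) * t ^ 2 - L * t := by
    intro t
    have h := hq c (q c + t)
    unfold pollutionUtility at h
    rw [hsum, Function.update_self, hQ] at h
    rw [hL]
    nlinarith [h]
  have hL0 : L = 0 := by
    have h1 := key (L / (2 * (B c + D c)))
    have hne : (B c + D c) ≠ 0 := ne_of_gt hBD
    have h2 : (B c + D c) * (L / (2 * (B c + D c))) ^ 2 - L * (L / (2 * (B c + D c)))
        = - (L ^ 2) / (4 * (B c + D c)) := by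
      field_simp
      ring
    rw [h2] at h1
    have h4 : L ^ 2 ≤ 0 := by
      by_contra hc
      push_neg at hc
      have : - (L ^ 2) / (4 * (B c + D c)) < 0 :=
        div_neg_of_neg_of_pos (by linarith) (by linarith)
      linarith
    have hsq : L ^ 2 = 0 := le_antisymm h4 (sq_nonneg L)
    exact pow_eq_zero_iff (by norm_num) |>.mp hsq
  have hBne : B c ≠ 0 := ne_of_gt hBc
  rw [hQ]
  field_simp
  nlinarith [hL0]
end

section
/- The pollution game with B_c > 0 and D_c ≥ 0 for all c has exactly one Nash equilibrium. -/
open Finset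

lemma quad_le (k a y : ℝ) (hk : 0 < k)
    (h : ∀ x : ℝ, a * x - k * x ^ 2 ≤ a * y - k * y ^ 2) : a = 2 * k * y := by
  have h2 := h (a / (2 * k))
  have hk' : k ≠ 0 := hk.ne'
  have h3 : a * (a / (2 * k)) - k * (a / (2 * k)) ^ 2 = a ^ 2 / (4 * k) := by
    field_simp; ring
  rw [h3] at h2
  have h4 : a ^ 2 ≤ (a * y - k * y ^ 2) * (4 * k) := by
    rw [div_le_iff₀ (by positivity : (0:ℝ) < 4 * k)] at h2
    linarith
  nlinarith [sq_nonneg (a - 2 * k * y)]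

lemma quad_ge (k a y x : ℝ) (hk : 0 < k) (h : a = 2 * k * y) :
    a * x - k * x ^ 2 ≤ a * y - k * y ^ 2 := by
  subst h
  nlinarith [mul_nonneg hk.le (sq_nonneg (x - y))]

lemma nash_iff {C : ℕ} (A B D : Fin C → ℝ) (hB : ∀ c, 0 < B c) (hD : ∀ c, 0 ≤ D c)
    (q : Fin C → ℝ) :
    IsNash A B D q ↔ ∀ c, A c = 2 * B c * q c + 2 * D c * (∑ j, q j) := by
  have hupd : ∀ (c : Fin C) (x : ℝ), pollutionUtility A B D c (Function.update q c x) =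
      (A c - 2 * D c * (∑ j ∈ univ.erase c, q j)) * x - (B c + D c) * x ^ 2
        - D c * (∑ j ∈ univ.erase c, q j) ^ 2 := by
    intro c x
    have hs : ∑ j, Function.update q c x j = x + ∑ j ∈ univ.erase c, q j := by
      rw [Finset.sum_update_of_mem (mem_univ c), Finset.erase_eq]
    simp only [pollutionUtility, Function.update_self, hs]
    ring
  have hS : ∀ c : Fin C, ∑ j, q j = q c + ∑ j ∈ univ.erase c, q j := fun c =>
    (Finset.add_sum_erase univ q (mem_univ c)).symm
  have hq : ∀ c : Fin C, pollutionUtility A B D c q =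
      (A c - 2 * D c * (∑ j ∈ univ.erase c, q j)) * q c - (B c + D c) * (q c) ^ 2
        - D c * (∑ j ∈ univ.erase c, q j) ^ 2 := by
    intro c
    have := hupd c (q c)
    rwa [Function.update_eq_self] at this
  constructor
  · intro h c
    have hk : 0 < B c + D c := by have := hB c; have := hD c; linarith
    have key : ∀ x : ℝ,
        (A c - 2 * D c * (∑ j ∈ univ.erase c, q j)) * x - (B c + D c) * x ^ 2 ≤
        (A c - 2 * D c * (∑ j ∈ univ.erase c, q j)) * q c - (B c + D c) * (q c) ^ 2 := by
      intro x
      have h1 := h c x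
      rw [hupd c x, hq c] at h1
      linarith
    have h2 := quad_le _ _ _ hk key
    rw [hS c]
    linarith
  · intro h c x
    have hk : 0 < B c + D c := by have := hB c; have := hD c; linarith
    have h1 : A c - 2 * D c * (∑ j ∈ univ.erase c, q j) = 2 * (B c + D c) * q c := by
      have := h c
      rw [hS c] at this
      linarith
    have := quad_ge (B c + D c) _ (q c) x hk h1
    rw [hupd c x, hq c]
    linarith

theorem pollution_unique_nash {C : ℕ}
    (A B D : Fin C → ℝ) (hB : ∀ c, 0 < B c) (hD : ∀ c, 0 ≤ D c) :
    ∃! q : Fin C → ℝ, IsNash A B D q := by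
  have hBne : ∀ c, B c ≠ 0 := fun c => (hB c).ne'
  set R : ℝ := ∑ c, D c / B c with hRdef
  have hR : 0 ≤ R := Finset.sum_nonneg fun c _ => div_nonneg (hD c) (hB c).le
  have hR1 : (1 : ℝ) + R ≠ 0 := by positivity
  set X : ℝ := ∑ c, A c / (2 * B c) with hXdef
  set S : ℝ := X / (1 + R) with hSdef
  have hSX : S * (1 + R) = X := div_mul_cancel₀ X hR1
  -- key: for any q' with first-order conditions, sum is determined
  have sum_eq : ∀ q' : Fin C → ℝ,
      (∀ c, q' c = (A c - 2 * D c * (∑ j, q' j)) / (2 * B c)) → (∑ j, q' j) = S := by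
    intro q' hq'
    set S' := ∑ j, q' j with hS'
    have h1 : ∀ c, q' c = A c / (2 * B c) - (D c / B c) * S' := by
      intro c
      rw [hq' c]
      field_simp [hBne c]
    have h2 : S' = X - R * S' := by
      rw [hS']
      calc ∑ j, q' j = ∑ j, (A j / (2 * B j) - (D j / B j) * S') := by
            exact Finset.sum_congr rfl fun j _ => h1 j
        _ = X - R * S' := by
            rw [Finset.sum_sub_distrib, ← Finset.sum_mul]
    have : S' * (1 + R) = X := by linarith
    have := this.trans hSX.symm
    exact mul_right_cancel₀ hR1 this
  refine ⟨fun c => (A c - 2 * D c * S) / (2 * B c), ?_, ?_⟩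
  · show IsNash A B D _
    rw [nash_iff A B D hB hD]
    have hsum : (∑ j, (A j - 2 * D j * S) / (2 * B j)) = S := by
      have h1 : ∀ c : Fin C, (A c - 2 * D c * S) / (2 * B c)
          = A c / (2 * B c) - (D c / B c) * S := by
        intro c; field_simp [hBne c]
      rw [Finset.sum_congr rfl fun j _ => h1 j, Finset.sum_sub_distrib, ← Finset.sum_mul,
        ← hXdef, ← hRdef]
      linarith
    intro c
    rw [hsum]
    field_simp [hBne c]
    ring
  · intro q' hq'
    rw [nash_iff A B D hB hD] at hq'
    have hfoc : ∀ c, q' c = (A c - 2 * D c * (∑ j, q' j)) / (2 * B c) := by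
      intro c
      have h2 : (2:ℝ) * B c ≠ 0 := by have := hB c; positivity
      rw [eq_div_iff h2]
      linear_combination -(hq' c)
    have hs := sum_eq q' hfoc
    funext c
    rw [hfoc c, hs]
end
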